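/- For every k ≥ 0, with J̄_k := J*⁻¹(J_k − J*), Broyden's 'good' update satisfies σ_{k+1}² ≤ σ_k² − (λ_{k+1}²/λ_k²)·‖J*⁻¹B_k u_k‖²/‖u_k‖² + 2(σ_k‖J̄_k‖ + ‖J̄_k‖²). -/

import Mathlib

open Matrix MeasureTheory

noncomputable def specNorm {n : ℕ} (A : Matrix (Fin n) (Fin n) ℝ) : ℝ :=
  ‖Matrix.toEuclideanCLM (𝕜 := ℝ) A‖

noncomputable def frobNorm {n : ℕ} (A : Matrix (Fin n) (Fin n) ℝ) : ℝ :=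
  Real.sqrt (∑ i, ∑ j, (A i j) ^ 2)

noncomputable def vnorm {n : ℕ} (x : Fin n → ℝ) : ℝ :=
  Real.sqrt (∑ i, (x i) ^ 2)

noncomputable def intJac {n : ℕ} (J : (Fin n → ℝ) → Matrix (Fin n) (Fin n) ℝ)
    (x u : Fin n → ℝ) : Matrix (Fin n) (Fin n) ℝ :=
  Matrix.of fun i j => ∫ t in (0:ℝ)..(1:ℝ), J (x + t • u) i j

section Aux

lemma vnorm_eq {n : ℕ} (x : Fin n → ℝ) :
    vnorm x = ‖(WithLp.equiv 2 (Fin n → ℝ)).symm x‖ := by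
  simp [vnorm, EuclideanSpace.norm_eq, Real.norm_eq_abs, sq_abs]

lemma vnorm_nonneg {n : ℕ} (x : Fin n → ℝ) : 0 ≤ vnorm x := Real.sqrt_nonneg _

lemma vnorm_sq {n : ℕ} (x : Fin n → ℝ) : vnorm x ^ 2 = ∑ i, (x i) ^ 2 :=
  Real.sq_sqrt (Finset.sum_nonneg fun _ _ => sq_nonneg _)

lemma vnorm_sub_le {n : ℕ} (a b : Fin n → ℝ) : vnorm (a - b) ≤ vnorm a + vnorm b := by
  simp only [vnorm_eq]
  rw [show (WithLp.equiv 2 (Fin n → ℝ)).symm (a - b)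
      = (WithLp.equiv 2 (Fin n → ℝ)).symm a - (WithLp.equiv 2 (Fin n → ℝ)).symm b from rfl]
  exact norm_sub_le _ _

lemma vnorm_neg {n : ℕ} (a : Fin n → ℝ) : vnorm (-a) = vnorm a := by
  simp [vnorm]

lemma vnorm_pos {n : ℕ} {x : Fin n → ℝ} (hx : x ≠ 0) : 0 < vnorm x := by
  rw [vnorm_eq, norm_pos_iff]
  intro h
  apply hx
  have := (WithLp.equiv 2 (Fin n → ℝ)).symm.injective (a₂ := 0) h
  simpa using this

lemma frobNorm_nonneg {n : ℕ} (A : Matrix (Fin n) (Fin n) ℝ) : 0 ≤ frobNorm A :=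
  Real.sqrt_nonneg _

lemma frobNorm_sq {n : ℕ} (A : Matrix (Fin n) (Fin n) ℝ) :
    frobNorm A ^ 2 = ∑ i, ∑ j, (A i j) ^ 2 :=
  Real.sq_sqrt (Finset.sum_nonneg fun _ _ => Finset.sum_nonneg fun _ _ => sq_nonneg _)

lemma specNorm_nonneg {n : ℕ} (A : Matrix (Fin n) (Fin n) ℝ) : 0 ≤ specNorm A :=
  norm_nonneg _

lemma vnorm_mulVec_le {n : ℕ} (A : Matrix (Fin n) (Fin n) ℝ) (u : Fin n → ℝ) :
    vnorm (A *ᵥ u) ≤ specNorm A * vnorm u := by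
  have h := (Matrix.toEuclideanCLM (𝕜 := ℝ) A).le_opNorm ((WithLp.equiv 2 (Fin n → ℝ)).symm u)
  rw [show (Matrix.toEuclideanCLM (𝕜 := ℝ) A) ((WithLp.equiv 2 (Fin n → ℝ)).symm u) = (WithLp.equiv 2 (Fin n → ℝ)).symm (Matrix.toLin' A u) from rfl, Matrix.toLin'_apply] at h
  rw [vnorm_eq, vnorm_eq]
  exact h

lemma vnorm_frob_mulVec_le {n : ℕ} (A : Matrix (Fin n) (Fin n) ℝ) (u : Fin n → ℝ) :
    vnorm (A *ᵥ u) ≤ frobNorm A * vnorm u := by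
  have key : ∑ i, ((A *ᵥ u) i) ^ 2 ≤ (∑ i, ∑ j, (A i j) ^ 2) * (∑ j, (u j) ^ 2) := by
    rw [Finset.sum_mul]
    apply Finset.sum_le_sum
    intro i _
    simpa [Matrix.mulVec, dotProduct] using
      Finset.sum_mul_sq_le_sq_mul_sq Finset.univ (fun j => A i j) u
  calc vnorm (A *ᵥ u) = Real.sqrt (∑ i, ((A *ᵥ u) i) ^ 2) := rfl
    _ ≤ Real.sqrt ((∑ i, ∑ j, (A i j) ^ 2) * (∑ j, (u j) ^ 2)) := Real.sqrt_le_sqrt key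
    _ = frobNorm A * vnorm u := by
        rw [Real.sqrt_mul (by positivity : (0:ℝ) ≤ ∑ i, ∑ j, (A i j) ^ 2)]
        rfl

lemma specNorm_le_frobNorm {n : ℕ} (A : Matrix (Fin n) (Fin n) ℝ) :
    specNorm A ≤ frobNorm A := by
  refine ContinuousLinearMap.opNorm_le_bound (Matrix.toEuclideanCLM (𝕜 := ℝ) A)
    (frobNorm_nonneg A) fun y => ?_
  have h := vnorm_frob_mulVec_le A (WithLp.equiv 2 (Fin n → ℝ) y)
  have hy : (WithLp.equiv 2 (Fin n → ℝ)).symm ((WithLp.equiv 2 (Fin n → ℝ)) y) = y :=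
    (WithLp.equiv 2 (Fin n → ℝ)).symm_apply_apply y
  rw [vnorm_eq, vnorm_eq, ← Matrix.toLin'_apply, ← show (Matrix.toEuclideanCLM (𝕜 := ℝ) A) ((WithLp.equiv 2 (Fin n → ℝ)).symm (WithLp.equiv 2 (Fin n → ℝ) y)) = (WithLp.equiv 2 (Fin n → ℝ)).symm (Matrix.toLin' A (WithLp.equiv 2 (Fin n → ℝ) y)) from rfl, hy] at h
  exact h

lemma mul_vecMulVec' {n : ℕ} (M : Matrix (Fin n) (Fin n) ℝ) (a b : Fin n → ℝ) :
    M * vecMulVec a b = vecMulVec (M *ᵥ a) b := by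
  ext i j
  simp [Matrix.mul_apply, vecMulVec_apply, Matrix.mulVec, dotProduct, Finset.sum_mul,
    mul_assoc]

lemma key_identity {n : ℕ} (E G : Matrix (Fin n) (Fin n) ℝ) (u : Fin n → ℝ) (hu : u ≠ 0) :
    frobNorm (E + (u ⬝ᵥ u)⁻¹ • vecMulVec (G *ᵥ u - E *ᵥ u) u) ^ 2
      = frobNorm E ^ 2 - vnorm (E *ᵥ u) ^ 2 / (u ⬝ᵥ u) + vnorm (G *ᵥ u) ^ 2 / (u ⬝ᵥ u) := by
  set c : ℝ := u ⬝ᵥ u with hc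
  have hcs : c = ∑ j, (u j) ^ 2 := by simp [hc, dotProduct, sq]
  have hcpos : 0 < c := by
    rw [hcs]
    obtain ⟨i, hi⟩ := Function.ne_iff.mp hu
    exact Finset.sum_pos' (fun _ _ => sq_nonneg _)
      ⟨i, Finset.mem_univ i, lt_of_le_of_ne (sq_nonneg _) (Ne.symm (pow_ne_zero 2 hi))⟩
  have hcne : c ≠ 0 := ne_of_gt hcpos
  set e : Fin n → ℝ := E *ᵥ u with he
  set g : Fin n → ℝ := G *ᵥ u with hg
  have hentry : ∀ i j, (E + c⁻¹ • vecMulVec (g - e) u) i j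
      = E i j + c⁻¹ * ((g i - e i) * u j) := by
    intro i j
    simp [Matrix.add_apply, Matrix.smul_apply, vecMulVec_apply, Pi.sub_apply, smul_eq_mul]
  have hei : ∀ i, e i = ∑ j, E i j * u j := fun i => rfl
  rw [frobNorm_sq, frobNorm_sq, vnorm_sq, vnorm_sq]
  have hrow : ∀ i, ∑ j, ((E + c⁻¹ • vecMulVec (g - e) u) i j) ^ 2
      = (∑ j, E i j ^ 2) + 2 * c⁻¹ * ((g i - e i) * e i)
          + c⁻¹ * c⁻¹ * ((g i - e i) ^ 2 * c) := by
    intro i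
    have : ∀ j, ((E + c⁻¹ • vecMulVec (g - e) u) i j) ^ 2
        = E i j ^ 2 + (2 * c⁻¹ * (g i - e i)) * (E i j * u j)
            + (c⁻¹ * c⁻¹ * (g i - e i) ^ 2) * (u j ^ 2) := by
      intro j; rw [hentry i j]; ring
    rw [Finset.sum_congr rfl fun j _ => this j]
    rw [Finset.sum_add_distrib, Finset.sum_add_distrib, ← Finset.mul_sum, ← Finset.mul_sum,
      ← hei i, ← hcs]
    ring
  rw [Finset.sum_congr rfl fun i _ => hrow i]
  rw [Finset.sum_add_distrib, Finset.sum_add_distrib, ← Finset.mul_sum, ← Finset.mul_sum]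
  have expand : ∀ i, (g i - e i) * e i = g i * e i - e i ^ 2 := fun i => by ring
  have expand2 : ∀ i, (g i - e i) ^ 2 * c = (g i ^ 2 - 2 * (g i * e i) + e i ^ 2) * c :=
    fun i => by ring
  rw [Finset.sum_congr rfl fun i _ => expand i, Finset.sum_congr rfl fun i _ => expand2 i]
  rw [Finset.sum_sub_distrib, ← Finset.sum_mul, Finset.sum_add_distrib, Finset.sum_sub_distrib,
    ← Finset.mul_sum]
  field_simp
  ring

lemma ftc {n : ℕ} (F : (Fin n → ℝ) → (Fin n → ℝ))
    (J : (Fin n → ℝ) → Matrix (Fin n) (Fin n) ℝ)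
    (hF : ∀ z, HasFDerivAt F (LinearMap.toContinuousLinearMap ((J z).mulVecLin)) z)
    (hJc : Continuous J) (x u : Fin n → ℝ) :
    F (x + u) - F x = intJac J x u *ᵥ u := by
  have hpath : Continuous fun t : ℝ => x + t • u := by continuity
  have hcomp : ∀ t : ℝ, HasDerivAt (fun s : ℝ => F (x + s • u)) (J (x + t • u) *ᵥ u) t := by
    intro t
    have h1 : HasDerivAt (fun s : ℝ => x + s • u) u t := by
      simpa using ((hasDerivAt_id t).smul_const u).const_add x
    have h2 := (hF (x + t • u)).comp_hasDerivAt t h1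
    simpa [Matrix.mulVecLin, Function.comp_def] using h2
  funext i
  have hci : ∀ j, Continuous fun t : ℝ => J (x + t • u) i j * u j :=
    fun j => ((hJc.comp hpath).matrix_elem i j).mul continuous_const
  have hInt : ∀ t ∈ Set.uIcc (0:ℝ) 1,
      HasDerivAt (fun s : ℝ => F (x + s • u) i) ((J (x + t • u) *ᵥ u) i) t := by
    intro t _
    exact (hasDerivAt_pi.mp (hcomp t)) i
  have hible : IntervalIntegrable (fun t : ℝ => (J (x + t • u) *ᵥ u) i) volume 0 1 := by
    have : Continuous fun t : ℝ => (J (x + t • u) *ᵥ u) i := by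
      simp only [Matrix.mulVec, dotProduct]
      exact continuous_finset_sum _ fun j _ => hci j
    exact this.intervalIntegrable 0 1
  have hfund := intervalIntegral.integral_eq_sub_of_hasDerivAt hInt hible
  have hswap : (intJac J x u *ᵥ u) i = ∫ t in (0:ℝ)..(1:ℝ), (J (x + t • u) *ᵥ u) i := by
    have h1 : (intJac J x u *ᵥ u) i
        = ∑ j, (∫ t in (0:ℝ)..(1:ℝ), J (x + t • u) i j) * u j := rfl
    rw [h1]
    have h2 : ∀ j, (∫ t in (0:ℝ)..(1:ℝ), J (x + t • u) i j) * u j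
        = ∫ t in (0:ℝ)..(1:ℝ), J (x + t • u) i j * u j := by
      intro j
      rw [← intervalIntegral.integral_mul_const]
    rw [Finset.sum_congr rfl fun j _ => h2 j]
    rw [← intervalIntegral.integral_finset_sum]
    · rfl
    · exact fun j _ => (hci j).intervalIntegrable 0 1
  rw [hswap, hfund]
  simp

end Aux

/-- One-step Frobenius-measure inequality for Broyden's "good" update, with the ratio
`λ_{k+1}²/λ_k²`:
`σ_{k+1}² ≤ σ_k² − (λ_{k+1}²/λ_k²)·‖J*⁻¹ B_k u_k‖²/‖u_k‖² + 2(σ_k‖J̄_k‖ + ‖J̄_k‖²)`. -/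
theorem stmt4 {n : ℕ} (F : (Fin n → ℝ) → (Fin n → ℝ))
    (J : (Fin n → ℝ) → Matrix (Fin n) (Fin n) ℝ)
    (hF : ∀ z, HasFDerivAt F (LinearMap.toContinuousLinearMap ((J z).mulVecLin)) z)
    (hJc : Continuous J)
    (xs : Fin n → ℝ) (hxs : F xs = 0) (hJs : IsUnit (J xs).det)
    (x : ℕ → Fin n → ℝ) (B : ℕ → Matrix (Fin n) (Fin n) ℝ)
    (hBk : ∀ k, IsUnit (B k).det) (hFk : ∀ k, F (x k) ≠ 0)
    (hx : ∀ k, x (k + 1) = x k - (B k)⁻¹ *ᵥ F (x k))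
    (hB : ∀ k, B (k + 1) = B k + ((x (k + 1) - x k) ⬝ᵥ (x (k + 1) - x k))⁻¹ •
        vecMulVec (F (x (k + 1)) - F (x k) - B k *ᵥ (x (k + 1) - x k)) (x (k + 1) - x k)) :
    ∀ k : ℕ,
      frobNorm ((J xs)⁻¹ * (B (k + 1) - J xs)) ^ 2 ≤
        frobNorm ((J xs)⁻¹ * (B k - J xs)) ^ 2
          - (vnorm ((J xs)⁻¹ *ᵥ F (x (k + 1))) ^ 2 / vnorm ((J xs)⁻¹ *ᵥ F (x k)) ^ 2) *
              (vnorm ((J xs)⁻¹ *ᵥ (B k *ᵥ (x (k + 1) - x k))) ^ 2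
                / vnorm (x (k + 1) - x k) ^ 2)
          + 2 * (frobNorm ((J xs)⁻¹ * (B k - J xs)) *
                specNorm ((J xs)⁻¹ * (intJac J (x k) (x (k + 1) - x k) - J xs))
              + specNorm ((J xs)⁻¹ * (intJac J (x k) (x (k + 1) - x k) - J xs)) ^ 2) := by
  intro k
  set A : Matrix (Fin n) (Fin n) ℝ := (J xs)⁻¹ with hA
  set u : Fin n → ℝ := x (k + 1) - x k with hu
  -- basic facts about u and B k
  have huval : u = -((B k)⁻¹ *ᵥ F (x k)) := by
    rw [hu, hx k]; abel
  have hBu : B k *ᵥ u = -(F (x k)) := by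
    rw [huval, Matrix.mulVec_neg, Matrix.mulVec_mulVec, Matrix.mul_nonsing_inv _ (hBk k),
      Matrix.one_mulVec]
  have hune : u ≠ 0 := by
    intro h
    apply hFk k
    have := hBu
    rw [h, Matrix.mulVec_zero] at this
    simpa using this.symm
  -- FTC
  have hxk1 : x (k + 1) = x k + u := by rw [hu]; abel
  have hftc : F (x (k + 1)) - F (x k) = intJac J (x k) u *ᵥ u := by
    rw [hxk1]; exact ftc F J hF hJc (x k) u
  set M : Matrix (Fin n) (Fin n) ℝ := intJac J (x k) u with hM
  have hF' : F (x (k + 1)) = (M - B k) *ᵥ u := by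
    have : F (x (k + 1)) = M *ᵥ u + F (x k) := by
      rw [← hftc]; abel
    rw [this, Matrix.sub_mulVec]
    rw [hBu]; abel
  set E : Matrix (Fin n) (Fin n) ℝ := A * (B k - J xs) with hE
  set G : Matrix (Fin n) (Fin n) ℝ := A * (M - J xs) with hG
  -- A *ᵥ F (x (k+1)) = G *ᵥ u - E *ᵥ u
  have hAF' : A *ᵥ F (x (k + 1)) = G *ᵥ u - E *ᵥ u := by
    rw [hF', Matrix.mulVec_mulVec]
    have : A * (M - B k) = G - E := by
      rw [hG, hE, ← Matrix.mul_sub]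
      congr 1
      abel
    rw [this, Matrix.sub_mulVec]
  -- update identity
  have hupdate : A * (B (k + 1) - J xs) = E + (u ⬝ᵥ u)⁻¹ • vecMulVec (G *ᵥ u - E *ᵥ u) u := by
    have hw : F (x (k + 1)) - F (x k) - B k *ᵥ u = F (x (k + 1)) := by
      rw [hBu]; abel
    have hBk1 : B (k + 1) - J xs
        = (B k - J xs) + (u ⬝ᵥ u)⁻¹ • vecMulVec (F (x (k + 1))) u := by
      rw [hB k, ← hu, hw]; abel
    rw [hBk1, Matrix.mul_add, ← hE, Matrix.mul_smul, mul_vecMulVec', hAF']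
  rw [hupdate, key_identity E G u hune]
  -- numeric bookkeeping
  set s : ℝ := vnorm u with hs
  have hspos : 0 < s := vnorm_pos hune
  have hcs : u ⬝ᵥ u = s ^ 2 := by
    rw [hs, vnorm_sq]; simp [dotProduct, sq]
  set σ : ℝ := frobNorm E with hσ
  set τ : ℝ := specNorm G with hτ
  set ee : ℝ := vnorm (E *ᵥ u) with hee
  set gg : ℝ := vnorm (G *ᵥ u) with hgg
  have hσ0 : 0 ≤ σ := frobNorm_nonneg E
  have hτ0 : 0 ≤ τ := specNorm_nonneg G
  have hee0 : 0 ≤ ee := vnorm_nonneg _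
  have hgg0 : 0 ≤ gg := vnorm_nonneg _
  have heeb : ee ≤ σ * s :=
    le_trans (vnorm_frob_mulVec_le E u) (le_refl _)
  have hggb : gg ≤ τ * s := vnorm_mulVec_le G u
  -- lambda facts
  set lam : ℝ := vnorm (A *ᵥ F (x k)) with hlam
  set lam' : ℝ := vnorm (A *ᵥ F (x (k + 1))) with hlam'
  have hlamBk : vnorm (A *ᵥ (B k *ᵥ u)) = lam := by
    rw [hBu, Matrix.mulVec_neg, vnorm_neg]
  have hlampos : 0 < lam := by
    apply vnorm_pos
    intro h
    apply hFk k
    have h2 : J xs *ᵥ (A *ᵥ F (x k)) = 0 := by rw [h, Matrix.mulVec_zero]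
    rw [Matrix.mulVec_mulVec, Matrix.mul_nonsing_inv _ hJs, Matrix.one_mulVec] at h2
    exact h2
  have hlam'b : lam' ≤ gg + ee := by
    rw [hlam', hAF']
    exact vnorm_sub_le _ _
  have hlam'0 : 0 ≤ lam' := vnorm_nonneg _
  -- reduce the ratio term
  have hratio : lam' ^ 2 / lam ^ 2 * (vnorm (A *ᵥ (B k *ᵥ u)) ^ 2 / vnorm u ^ 2)
      = lam' ^ 2 / s ^ 2 := by
    rw [hlamBk, ← hs]
    field_simp
  rw [hratio]
  have hds : u ⬝ᵥ u = s ^ 2 := hcs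
  rw [hds]
  have hs2 : (0:ℝ) < s ^ 2 := by positivity
  -- key numeric inequality
  have key2 : gg ^ 2 + lam' ^ 2 ≤ ee ^ 2 + (2 * (σ * τ + τ ^ 2)) * s ^ 2 := by
    have h1 : lam' ^ 2 ≤ (gg + ee) ^ 2 := by
      apply pow_le_pow_left₀ hlam'0 hlam'b
    have h2 : gg ^ 2 ≤ (τ * s) ^ 2 := pow_le_pow_left₀ hgg0 hggb 2
    have h3 : gg * ee ≤ (τ * s) * (σ * s) :=
      mul_le_mul hggb heeb hee0 (by positivity)
    nlinarith [h1, h2, h3]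
  have hfin : gg ^ 2 / s ^ 2 + lam' ^ 2 / s ^ 2
      ≤ ee ^ 2 / s ^ 2 + 2 * (σ * τ + τ ^ 2) := by
    rw [← add_div, div_add' _ _ _ (ne_of_gt hs2)] at *
    rw [div_le_div_iff₀ hs2 hs2]
    nlinarith [key2, hs2]
  linarith [hfin]
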